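/- Let q = p^t with p an odd prime and t ≥ 2, n = q+1, a = n/2, and 2 ≤ i ≤ a−1. Let α be a primitive n-th root of unity in F_{q^2}, and let C be the cyclic code of length n over F_q with generator polynomial g(x) equal to the lcm of the minimal polynomials of α^{a−i}, …, α^a over F_q. Then deg g = 2i+1, C has dimension n − 2i − 1, and C is an MDS code with minimum distance 2i+2. -/

import Mathlib

/-- The q-ary cyclotomic coset of `s` modulo `n`. -/
def cyclotomicCoset (q n s : ℕ) : Set ℕ := {x | ∃ j : ℕ, x = s * q ^ j % n}

/-- The evaluation-at-`α^s` parity-check functional. -/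
noncomputable def bchCheck (F E : Type*) [Field F] [Field E] [Algebra F E]
    (n : ℕ) (α : E) (s : ℕ) : (Fin n → F) →ₗ[F] E where
  toFun c := ∑ j : Fin n, c j • α ^ (s * (j : ℕ))
  map_add' x y := by simp [add_smul, Finset.sum_add_distrib]
  map_smul' r x := by simp [smul_smul, Finset.smul_sum]

/-- The cyclic (BCH) code of length `n` over `F` with defining set `Z`; this is the
code with generator polynomial the lcm of the minimal polynomials of `α^s`, `s ∈ Z`. -/
noncomputable def bchCode (F E : Type*) [Field F] [Field E] [Algebra F E]
    (n : ℕ) (α : E) (Z : Set ℕ) : Submodule F (Fin n → F) :=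
  ⨅ s ∈ Z, LinearMap.ker (bchCheck F E n α s)

section Aux

open Matrix

variable {F E : Type*} [Field F] [Fintype F] [DecidableEq F] [Field E] [Fintype E] [Algebra F E]

lemma bchCheck_apply (n : ℕ) (α : E) (s : ℕ) (c : Fin n → F) :
    bchCheck F E n α s c = ∑ j : Fin n, c j • α ^ (s * (j : ℕ)) := rfl

lemma bchCheck_mod (n : ℕ) (α : E) (hα : orderOf α = n) (s : ℕ) (c : Fin n → F) :
    bchCheck F E n α s c = bchCheck F E n α (s % n) c := by
  rw [bchCheck_apply, bchCheck_apply]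
  refine Finset.sum_congr rfl fun j _ => ?_
  congr 1
  rw [← pow_mod_orderOf, hα, ← pow_mod_orderOf (n := s % n * (j : ℕ)), hα]
  congr 1
  conv_lhs => rw [Nat.mul_mod]
  conv_rhs => rw [Nat.mul_mod, Nat.mod_mod_of_dvd _ dvd_rfl]

lemma bchCheck_frob (p t q n : ℕ) [Fact p.Prime] [CharP E p] (hq : q = p ^ t)
    (hF : Fintype.card F = q) (α : E) (s : ℕ) (c : Fin n → F) :
    bchCheck F E n α (s * q) c = (bchCheck F E n α s c) ^ q := by
  have key : ∀ (r : F) (z : E), (r • z) ^ q = r • z ^ q := by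
    intro r z
    rw [Algebra.smul_def, Algebra.smul_def, mul_pow, ← map_pow, ← hF, FiniteField.pow_card]
  rw [bchCheck_apply, bchCheck_apply]
  conv_rhs => rw [hq, sum_pow_char_pow]
  refine Finset.sum_congr rfl fun j _ => ?_
  rw [← hq, key, ← pow_mul]
  congr 2
  ring

lemma alpha_pow_inj {n : ℕ} (hn : 0 < n) (α : E) (hα : orderOf α = n) {u v : ℕ}
    (hu : u < n) (hv : v < n) (h : α ^ u = α ^ v) : u = v := by
  have hα1 : α ^ n = 1 := by rw [← hα]; exact pow_orderOf_eq_one α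
  have hα0 : α ≠ 0 := by
    rintro rfl
    rw [zero_pow hn.ne'] at hα1
    exact zero_ne_one hα1
  wlog huv : u ≤ v generalizing u v
  · exact (this hv hu h.symm (le_of_not_ge huv)).symm
  have h2 : α ^ (v - u) = 1 := by
    have h3 : α ^ u * α ^ (v - u) = α ^ u * 1 := by
      rw [mul_one, ← pow_add, h]
      congr 1
      omega
    exact mul_left_cancel₀ (pow_ne_zero _ hα0) h3
  have hd := orderOf_dvd_iff_pow_eq_one.2 h2
  rw [hα] at hd
  have := Nat.eq_zero_of_dvd_of_lt hd
  omega

/-- BCH bound: a vector annihilated by checks at `w` consecutive powers with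
Hamming weight at most `w` is zero. -/
lemma bch_bound {n : ℕ} (hn : 0 < n) (α : E) (hα : orderOf α = n) (b w : ℕ) (c : Fin n → F)
    (hw : hammingNorm c ≤ w)
    (hz : ∀ m : ℕ, m < w → bchCheck F E n α (b + m) c = 0) : c = 0 := by
  set J : Finset (Fin n) := {j | c j ≠ 0} with hJ
  have hJcard : J.card = hammingNorm c := rfl
  set W := J.card with hW
  let e : Fin W ≃o J := J.orderIsoOfFin rfl
  let x : Fin W → E := fun k => α ^ (((e k : Fin n)) : ℕ)
  have hxinj : Function.Injective x := by
    intro k l hkl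
    have h1 : (e k : Fin n) = (e l : Fin n) :=
      Fin.ext (alpha_pow_inj hn α hα (e k : Fin n).isLt (e l : Fin n).isLt hkl)
    exact e.injective (Subtype.ext h1)
  have hdet : IsUnit (Matrix.vandermonde x)ᵀ.det := by
    rw [Matrix.det_transpose, Matrix.det_vandermonde]
    apply IsUnit.mk0
    apply Finset.prod_ne_zero_iff.2
    intro k _
    apply Finset.prod_ne_zero_iff.2
    intro l hl
    rw [Finset.mem_Ioi] at hl
    exact sub_ne_zero_of_ne fun hxx => hl.ne' (hxinj hxx)
  let v : Fin W → E := fun k => algebraMap F E (c (e k)) * α ^ (b * ((e k : Fin n) : ℕ))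
  have hsys : (Matrix.vandermonde x)ᵀ.mulVec v = 0 := by
    funext m
    have hm : (m : ℕ) < w := lt_of_lt_of_le m.isLt (le_trans hJcard.le hw)
    have h0 := hz m hm
    rw [bchCheck_apply] at h0
    have hsum : ∑ j : Fin n, c j • α ^ ((b + (m : ℕ)) * (j : ℕ))
        = ∑ j ∈ J, c j • α ^ ((b + (m : ℕ)) * (j : ℕ)) := by
      refine (Finset.sum_subset J.subset_univ fun j _ hj => ?_).symm
      have hcj : c j = 0 := by
        by_contra hcj
        exact hj (by simp [hJ, hcj])
      rw [hcj, zero_smul]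
    rw [hsum] at h0
    have hJsum : ∑ j ∈ J, c j • α ^ ((b + (m : ℕ)) * (j : ℕ))
        = ∑ k : Fin W, c (e k) • α ^ ((b + (m : ℕ)) * ((e k : Fin n) : ℕ)) := by
      rw [← Finset.sum_coe_sort J]
      exact (Fintype.sum_equiv e.toEquiv _ _ fun k => rfl).symm
    rw [hJsum] at h0
    have hterm : ∀ k : Fin W, c (e k) • α ^ ((b + (m : ℕ)) * ((e k : Fin n) : ℕ))
        = x k ^ (m : ℕ) * v k := by
      intro k
      rw [Algebra.smul_def]
      have hsplit : ((b + (m : ℕ)) * ((e k : Fin n) : ℕ))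
          = b * ((e k : Fin n) : ℕ) + ((e k : Fin n) : ℕ) * (m : ℕ) := by ring
      rw [hsplit, pow_add]
      simp only [x, v, pow_mul]
      ring
    rw [Finset.sum_congr rfl fun k _ => hterm k] at h0
    simpa [Matrix.mulVec, dotProduct, Matrix.transpose_apply,
      Matrix.vandermonde_apply] using h0
  have hv : v = 0 := by
    calc v = (1 : Matrix (Fin W) (Fin W) E).mulVec v := (Matrix.one_mulVec v).symm
      _ = ((Matrix.vandermonde x)ᵀ⁻¹ * (Matrix.vandermonde x)ᵀ).mulVec v := by
          rw [Matrix.nonsing_inv_mul _ hdet]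
      _ = (Matrix.vandermonde x)ᵀ⁻¹.mulVec ((Matrix.vandermonde x)ᵀ.mulVec v) :=
          (Matrix.mulVec_mulVec v _ _).symm
      _ = 0 := by rw [hsys, Matrix.mulVec_zero]
  funext j
  simp only [Pi.zero_apply]
  by_contra hcj
  have hjJ : j ∈ J := by simp [hJ, hcj]
  have hk : v (e.symm ⟨j, hjJ⟩) = 0 := by rw [hv]; rfl
  simp only [v, OrderIso.apply_symm_apply] at hk
  rcases mul_eq_zero.1 hk with h | h
  · exact hcj ((map_eq_zero _).1 h)
  · have hα1 : α ^ n = 1 := by rw [← hα]; exact pow_orderOf_eq_one α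
    have hα0 : α ≠ 0 := by
      rintro rfl
      rw [zero_pow hn.ne'] at hα1
      exact zero_ne_one hα1
    exact pow_ne_zero _ hα0 h

/-- Singleton-type projection lemma: a subspace of dimension at least `k` contains a
nonzero vector of Hamming weight at most `n - k + 1`. -/
lemma exists_low_weight {n : ℕ} (k : ℕ) (C : Submodule F (Fin n → F)) (hk : 0 < k)
    (hfr : k ≤ Module.finrank F C) : ∃ c ∈ C, c ≠ 0 ∧ hammingNorm c ≤ n - k + 1 := by
  have hkn : k ≤ n := le_trans hfr (by
    simpa [Module.finrank_fin_fun] using Submodule.finrank_le C)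
  let π : (Fin n → F) →ₗ[F] (Fin (k - 1) → F) :=
    LinearMap.funLeft F F (Fin.castLE (by omega))
  let ρ := π.comp C.subtype
  have hρ : ¬ Function.Injective ρ := by
    intro hinj
    have h1 := LinearMap.finrank_le_finrank_of_injective hinj
    rw [Module.finrank_fin_fun] at h1
    omega
  rw [← LinearMap.ker_eq_bot] at hρ
  obtain ⟨c, hcker, hc0⟩ := (Submodule.ne_bot_iff _).1 hρ
  refine ⟨c.1, c.2, fun h => hc0 (Subtype.ext h), ?_⟩
  have hzero : ∀ m : Fin (k - 1), c.1 (Fin.castLE (by omega) m) = 0 :=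
    fun m => congrFun (hcker : ρ c = 0) m
  have hsub : ({j | c.1 j ≠ 0} : Finset (Fin n)) ⊆ ({j | k - 1 ≤ (j : ℕ)} : Finset (Fin n)) := by
    intro j hj
    simp only [Finset.mem_filter, Finset.mem_univ, true_and] at hj ⊢
    by_contra hlt
    push_neg at hlt
    exact hj (hzero ⟨j, hlt⟩)
  have hcard := Finset.card_le_card hsub
  have hlt : k - 1 < n := by omega
  have hcompl : (({j | k - 1 ≤ (j : ℕ)} : Finset (Fin n))).card = n - (k - 1) := by
    have h1 := Finset.card_filter_add_card_filter_not
      (s := (Finset.univ : Finset (Fin n))) (p := fun j : Fin n => k - 1 ≤ (j : ℕ))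
    have h2 : (Finset.univ.filter fun j : Fin n => ¬ (k - 1 ≤ (j : ℕ))).card = k - 1 := by
      have he : (Finset.univ.filter fun j : Fin n => ¬ (k - 1 ≤ (j : ℕ)))
          = Finset.Iio (⟨k - 1, hlt⟩ : Fin n) := by
        ext j
        simp only [Finset.mem_filter, Finset.mem_univ, true_and, Finset.mem_Iio, Fin.lt_def,
          not_le]
      rw [he, Fin.card_Iio]
    have h3 : (Finset.univ : Finset (Fin n)).card = n := by simp
    have h4 : ({j | k - 1 ≤ (j : ℕ)} : Finset (Fin n))
        = Finset.univ.filter fun j : Fin n => k - 1 ≤ (j : ℕ) := rfl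
    omega
  have : hammingNorm c.1 = ({j | c.1 j ≠ 0} : Finset (Fin n)).card := rfl
  omega

end Aux

theorem bch_code_mds_odd_case (p t q n a i : ℕ) (hp : p.Prime) (hodd : Odd p)
    (ht : 2 ≤ t) (hq : q = p ^ t) (hn : n = q + 1) (ha : a = n / 2)
    (hi1 : 2 ≤ i) (hi2 : i ≤ a - 1)
    (F E : Type*) [Field F] [Fintype F] [DecidableEq F] [Field E] [Fintype E]
    [Algebra F E] (hF : Fintype.card F = q) (hE : Fintype.card E = q ^ 2)
    (α : E) (hα : orderOf α = n)
    (C : Submodule F (Fin n → F))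
    (hC : C = bchCode F E n α (⋃ j ∈ Set.Iic i, cyclotomicCoset q n (a - j))) :
    -- the generator polynomial has degree 2i+1, equivalently:
    Module.finrank F C = n - (2 * i + 1) ∧
    (∀ c ∈ C, c ≠ 0 → 2 * i + 2 ≤ hammingNorm c) ∧
    (∃ c ∈ C, c ≠ 0 ∧ hammingNorm c = 2 * i + 2) ∧
    2 * i + 2 = n - (n - 2 * i - 1) + 1 := by
  -- numeric preliminaries
  have hp2 : 2 ≤ p := hp.two_le
  have hp3 : 3 ≤ p := by
    rcases hodd with ⟨m, hm⟩
    omega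
  have hq9 : 9 ≤ q := by
    rw [hq]
    calc 9 = 3 ^ 2 := by norm_num
      _ ≤ p ^ 2 := Nat.pow_le_pow_left hp3 2
      _ ≤ p ^ t := Nat.pow_le_pow_right (by omega) ht
  have hqodd : Odd q := by rw [hq]; exact hodd.pow
  have hn2a : n = 2 * a := by
    rcases hqodd with ⟨m, hm⟩
    omega
  have ha5 : 5 ≤ a := by omega
  have hia : i + 1 ≤ a := by omega
  have hn0 : 0 < n := by omega
  -- characteristic of E
  haveI hfp : Fact p.Prime := ⟨hp⟩
  have hrp : ringChar E = p := by
    haveI hcp : CharP E (ringChar E) := ringChar.charP E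
    obtain ⟨m, hpr, hcard⟩ := FiniteField.card E (ringChar E)
    have hpow : ringChar E ^ (m : ℕ) = p ^ (2 * t) := by
      rw [← hcard, hE, hq, ← pow_mul, mul_comm t 2]
    have hdvd : ringChar E ∣ p ^ (2 * t) := by
      rw [← hpow]
      exact dvd_pow_self _ (by exact_mod_cast m.ne_zero)
    exact (Nat.prime_dvd_prime_iff_eq hpr hp).1 (hpr.dvd_of_dvd_pow hdvd)
  haveI hcE : CharP E p := hrp ▸ ringChar.charP E
  -- facts about α
  have hα1 : α ^ n = 1 := by rw [← hα]; exact pow_orderOf_eq_one α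
  have hαa : α ^ a = -1 := by
    have hsq : α ^ a * α ^ a = 1 := by
      rw [← pow_add]
      have : a + a = n := by omega
      rw [this, hα1]
    rcases mul_self_eq_one_iff.1 hsq with h1 | h1
    · exfalso
      have hd := orderOf_dvd_iff_pow_eq_one.2 h1
      rw [hα] at hd
      have := Nat.le_of_dvd (by omega) hd
      omega
    · exact h1
  have hfinE : Module.finrank F E = 2 := by
    have hcard := Module.card_eq_pow_finrank (K := F) (V := E)
    rw [hF, hE] at hcard
    exact (Nat.pow_right_injective (by omega) hcard.symm)
  -- checks vanish on C
  have hre : ∀ s ∈ (⋃ j ∈ Set.Iic i, cyclotomicCoset q n (a - j)),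
      ∀ c ∈ C, bchCheck F E n α s c = 0 := by
    intro s hs c hc
    rw [hC, bchCode] at hc
    simp only [Submodule.mem_iInf, LinearMap.mem_ker] at hc
    exact hc s hs
  -- coset computation
  have hmod0 : ∀ j ≤ i, (a - j) * q ^ 0 % n = a - j := by
    intro j hj
    rw [pow_zero, mul_one]
    exact Nat.mod_eq_of_lt (by omega)
  have hmod1 : ∀ j ≤ i, (a - j) * q ^ 1 % n = a + j := by
    intro j hj
    have he : a - j = (a - j - 1) + 1 := by omega
    have hqe : q = a + j + (a - j - 1) := by omega
    have hne : n = a + j + (a - j - 1) + 1 := by omega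
    obtain ⟨e', he'⟩ : ∃ e', a - j - 1 = e' := ⟨_, rfl⟩
    have h2 : (a - j) * q = (a + j) + (a - j - 1) * n := by
      have h1' : a - j = e' + 1 := by omega
      have h2' : q = a + j + e' := by omega
      have h3' : n = a + j + e' + 1 := by omega
      rw [he', h1', h2', h3']; ring
    rw [pow_one, h2, Nat.add_mul_mod_self_right]
    exact Nat.mod_eq_of_lt (by omega)
  have hcheck : ∀ c ∈ C, ∀ j ≤ i,
      bchCheck F E n α (a - j) c = 0 ∧ bchCheck F E n α (a + j) c = 0 := by
    intro c hc j hj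
    constructor
    · refine hre _ ?_ c hc
      exact Set.mem_biUnion (Set.mem_Iic.2 hj) ⟨0, (hmod0 j hj).symm⟩
    · refine hre _ ?_ c hc
      exact Set.mem_biUnion (Set.mem_Iic.2 hj) ⟨1, (hmod1 j hj).symm⟩
  -- minimum distance lower bound (BCH bound)
  have hdist : ∀ c ∈ C, c ≠ 0 → 2 * i + 2 ≤ hammingNorm c := by
    intro c hc hc0
    by_contra hlt
    push_neg at hlt
    apply hc0
    apply bch_bound hn0 α hα (a - i) (2 * i + 1) c (by omega)
    intro m hm
    rcases le_or_gt m i with hmi | hmi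
    · have hrw : a - i + m = a - (i - m) := by omega
      rw [hrw]
      exact (hcheck c hc (i - m) (by omega)).1
    · have hrw : a - i + m = a + (m - i) := by omega
      rw [hrw]
      exact (hcheck c hc (m - i) (by omega)).2
  -- the parity-check map Φ
  let Φ : (Fin n → F) →ₗ[F] ((Fin i → E) × F) :=
    (LinearMap.pi fun m : Fin i => bchCheck F E n α (a - i + (m : ℕ))).prod
      (bchCheck F F n (-1) 1)
  have hQ2 : ∀ c : Fin n → F,
      bchCheck F E n α a c = algebraMap F E (bchCheck F F n (-1) 1 c) := by
    intro c
    rw [bchCheck_apply, bchCheck_apply, map_sum]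
    refine Finset.sum_congr rfl fun j _ => ?_
    have hpm : α ^ (a * (j : ℕ)) = (-1 : E) ^ (j : ℕ) := by rw [pow_mul, hαa]
    rw [Algebra.smul_def, hpm, smul_eq_mul, one_mul, map_mul, map_pow, map_neg, map_one]
  have hker : C = LinearMap.ker Φ := by
    apply le_antisymm
    · intro c hc
      have h1 : (LinearMap.pi fun m : Fin i => bchCheck F E n α (a - i + (m : ℕ))) c = 0 := by
        funext m
        have hrw : a - i + (m : ℕ) = a - (i - (m : ℕ)) := by
          have := m.isLt; omega
        rw [LinearMap.pi_apply, hrw]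
        exact (hcheck c hc (i - (m : ℕ)) (by omega)).1
      have h2 : bchCheck F F n (-1) 1 c = 0 := by
        have h0 := (hcheck c hc 0 (by omega)).1
        rw [Nat.sub_zero, hQ2] at h0
        exact (algebraMap F E).injective (by rw [h0, map_zero])
      rw [LinearMap.mem_ker, LinearMap.prod_apply]
      rw [Function.prod, h1, h2]
      rfl
    · intro c hc
      rw [LinearMap.mem_ker] at hc
      have hc1 : (LinearMap.pi fun m : Fin i => bchCheck F E n α (a - i + (m : ℕ))) c = 0 :=
        congrArg Prod.fst hc
      have hc2 : bchCheck F F n (-1) 1 c = 0 := congrArg Prod.snd hc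
      have hbase : ∀ j ≤ i, bchCheck F E n α (a - j) c = 0 := by
        intro j hj
        rcases Nat.eq_zero_or_pos j with rfl | hj0
        · rw [Nat.sub_zero, hQ2, hc2, map_zero]
        · have hm : i - j < i := by omega
          have hfun := congrFun hc1 ⟨i - j, hm⟩
          rw [LinearMap.pi_apply] at hfun
          have hrw : a - i + (i - j) = a - j := by omega
          rw [hrw] at hfun
          exact hfun
      rw [hC, bchCode]
      simp only [Submodule.mem_iInf, LinearMap.mem_ker]
      rintro s ⟨S, ⟨j, rfl⟩, hsS⟩
      simp only [Set.mem_iUnion, Set.mem_setOf_eq] at hsS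
      obtain ⟨hj, k, hsk⟩ := hsS
      rw [Set.mem_Iic] at hj
      subst hsk
      rw [← bchCheck_mod n α hα]
      have hind : ∀ k : ℕ, bchCheck F E n α ((a - j) * q ^ k) c
          = (bchCheck F E n α (a - j) c) ^ (q ^ k) := by
        intro k
        induction k with
        | zero => simp
        | succ k ih =>
          have hrw : (a - j) * q ^ (k + 1) = ((a - j) * q ^ k) * q := by ring
          rw [hrw, bchCheck_frob p t q n hq hF α _ c, ih, ← pow_mul, ← pow_succ]
      rw [hind k, hbase j hj, zero_pow (by positivity)]
  -- finrank computations
  have hrankPi : Module.finrank F ((Fin i → E) × F) = 2 * i + 1 := by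
    rw [Module.finrank_prod, Module.finrank_pi_fintype, Module.finrank_self]
    simp [hfinE, Finset.sum_const, mul_comm]
  have hlow : n - (2 * i + 1) ≤ Module.finrank F C := by
    rw [hker]
    have h1 := LinearMap.finrank_range_add_finrank_ker Φ
    rw [Module.finrank_fin_fun] at h1
    have h2 : Module.finrank F (LinearMap.range Φ) ≤ 2 * i + 1 := by
      rw [← hrankPi]
      exact Submodule.finrank_le _
    omega
  have hnbig : 2 * i + 2 ≤ n := by omega
  have hup : Module.finrank F C ≤ n - (2 * i + 1) := by
    by_contra hgt
    push_neg at hgt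
    obtain ⟨c, hcC, hc0, hcw⟩ := exists_low_weight (n - 2 * i) C (by omega) (by omega)
    have hge := hdist c hcC hc0
    have hx : n - (n - 2 * i) + 1 = 2 * i + 1 := by omega
    omega
  have hfr : Module.finrank F C = n - (2 * i + 1) := le_antisymm hup hlow
  have hex : ∃ c ∈ C, c ≠ 0 ∧ hammingNorm c = 2 * i + 2 := by
    obtain ⟨c, hcC, hc0, hcw⟩ := exists_low_weight (n - 2 * i - 1) C (by omega) (by omega)
    refine ⟨c, hcC, hc0, le_antisymm ?_ (hdist c hcC hc0)⟩
    have hx : n - (n - 2 * i - 1) + 1 = 2 * i + 2 := by omega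
    omega
  exact ⟨hfr, hdist, hex, by omega⟩
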